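/- If a partial action α satisfies the Reiter condition (P₁), then for every p ≥ 1 it satisfies the Reiter condition (P_p). (Proof via g := f^{1/p} and the inequality |a−b|^p ≤ |a^p − b^p| for a,b ≥ 0.) -/

import Mathlib

open MeasureTheory
open scoped ENNReal

/-- A Borel partial action of a group `G` on a measure space `(X, ν)` with quasi-invariant
measure `ν` and Radon–Nikodym cocycle `σ`: `ν(α_t(E)) = ∫_E σ(·,t) dν` for Borel
`E ⊆ dom t⁻¹`. -/
structure BorelPartialAction (G : Type*) [Group G] (X : Type*) [MeasurableSpace X]
    (ν : Measure X) where
  dom : G → Set X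
  act : G → X → X
  σ : X → G → ℝ
  dom_meas : ∀ t : G, MeasurableSet (dom t)
  act_meas : ∀ t : G, Measurable (act t)
  σ_meas : ∀ t : G, Measurable fun x => σ x t
  σ_nonneg : ∀ (x : X) (t : G), 0 ≤ σ x t
  bijOn : ∀ t : G, Set.BijOn (act t) (dom t⁻¹) (dom t)
  rn : ∀ t : G, ∀ E : Set X, MeasurableSet E → E ⊆ dom t⁻¹ →
    ν (act t '' E) = ∫⁻ x in E, ENNReal.ofReal (σ x t) ∂ν

/-- The Reiter condition `(P_p)` for a partial action. -/
def ReiterP {G X : Type*} [Group G] [TopologicalSpace G] [MeasurableSpace X]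
    {ν : Measure X} (α : BorelPartialAction G X ν) (p : ℝ) : Prop :=
  ∀ K : Set G, IsCompact K → ∀ ε : ℝ, 0 < ε →
    ∃ f : X → ℝ, Measurable f ∧ (∀ x, 0 ≤ f x) ∧ (∫ x, f x ^ p ∂ν) = 1 ∧
      ∀ t ∈ K,
        (∫ x in α.dom t⁻¹, |f x - (α.σ x t) ^ (1 / p) * f (α.act t x)| ^ p ∂ν) < ε

lemma myAddRpow {x y p : ℝ} (hx : 0 ≤ x) (hy : 0 ≤ y) (hp : 1 ≤ p) :
    x ^ p + y ^ p ≤ (x + y) ^ p := by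
  have h := NNReal.add_rpow_le_rpow_add x.toNNReal y.toNNReal hp
  have h2 := NNReal.coe_le_coe.mpr h
  push_cast at h2
  rwa [Real.coe_toNNReal x hx, Real.coe_toNNReal y hy] at h2

lemma myAbsSubRpow {a b p : ℝ} (ha : 0 ≤ a) (hb : 0 ≤ b) (hp : 1 ≤ p) :
    |a - b| ^ p ≤ |a ^ p - b ^ p| := by
  have key : ∀ u v : ℝ, 0 ≤ v → v ≤ u → (u - v) ^ p ≤ u ^ p - v ^ p := by
    intro u v hv huv
    have h := myAddRpow (x := u - v) (y := v) (by linarith) hv hp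
    rw [sub_add_cancel] at h
    linarith
  rcases le_total b a with hba | hab
  · rw [abs_of_nonneg (by linarith), abs_of_nonneg
      (by linarith [Real.rpow_le_rpow hb hba (by linarith : (0:ℝ) ≤ p)])]
    exact key a b hb hba
  · rw [abs_of_nonpos (by linarith), abs_of_nonpos
      (by linarith [Real.rpow_le_rpow ha hab (by linarith : (0:ℝ) ≤ p)]), neg_sub, neg_sub]
    exact key b a ha hab


/-- If a partial action satisfies the Reiter condition `(P₁)`, then it satisfies the
Reiter condition `(P_p)` for every `p ≥ 1`. -/
theorem reiterP1_implies_reiterPp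
    {G X : Type*} [Group G] [TopologicalSpace G] [IsTopologicalGroup G]
    [LocallyCompactSpace G] [MeasurableSpace X] {ν : Measure X}
    (α : BorelPartialAction G X ν) (h : ReiterP α 1) :
    ∀ p : ℝ, 1 ≤ p → ReiterP α p := by
  intro p hp K hK ε hε
  obtain ⟨f, hf_meas, hf_nonneg, hf_one, hf_small⟩ := h K hK ε hε
  simp only [Real.rpow_one, one_div_one] at hf_one hf_small
  have hp0 : p ≠ 0 := by positivity
  -- f is integrable
  have hf_int : Integrable f ν := by
    by_contra hni
    rw [integral_undef hni] at hf_one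
    norm_num at hf_one
  set g : X → ℝ := fun x => f x ^ (1 / p) with hg_def
  have hg_meas : Measurable g := by fun_prop
  have hg_nonneg : ∀ x, 0 ≤ g x := fun x => Real.rpow_nonneg (hf_nonneg x) _
  have hg_pow : ∀ x, g x ^ p = f x := by
    intro x
    simp only [hg_def]
    rw [← Real.rpow_mul (hf_nonneg x), one_div_mul_cancel hp0, Real.rpow_one]
  refine ⟨g, hg_meas, hg_nonneg, by simp only [hg_pow, hf_one], ?_⟩
  intro t ht
  set E := α.dom t⁻¹ with hE_def
  have hE_meas : MeasurableSet E := α.dom_meas t⁻¹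
  -- pointwise bound
  have hSF : ∀ x, |g x - (α.σ x t) ^ (1 / p) * g (α.act t x)| ^ p
      ≤ |f x - α.σ x t * f (α.act t x)| := by
    intro x
    have hb : 0 ≤ (α.σ x t) ^ (1 / p) * g (α.act t x) :=
      mul_nonneg (Real.rpow_nonneg (α.σ_nonneg x t) _) (hg_nonneg _)
    have key := myAbsSubRpow (hg_nonneg x) hb hp
    rwa [hg_pow, Real.mul_rpow (Real.rpow_nonneg (α.σ_nonneg x t) _) (hg_nonneg _),
      hg_pow, ← Real.rpow_mul (α.σ_nonneg x t), one_div_mul_cancel hp0,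
      Real.rpow_one] at key
  -- measure map identity
  set μ : Measure X := (ν.restrict E).withDensity (fun x => ENNReal.ofReal (α.σ x t)) with hμ_def
  have hmap : Measure.map (α.act t) μ = ν.restrict (α.dom t) := by
    ext A hA
    have hpre : MeasurableSet ((α.act t) ⁻¹' A) := (α.act_meas t) hA
    rw [Measure.map_apply (α.act_meas t) hA, hμ_def,
      withDensity_apply _ hpre, Measure.restrict_restrict hpre,
      ← α.rn t _ (hpre.inter hE_meas) Set.inter_subset_right, Measure.restrict_apply hA,
      Set.inter_comm ((α.act t) ⁻¹' A) E, Set.image_inter_preimage, (α.bijOn t).image_eq,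
      Set.inter_comm]
  -- change of variables
  have hcv : ∫⁻ x in E, ENNReal.ofReal (α.σ x t) * ENNReal.ofReal (f (α.act t x)) ∂ν
      = ∫⁻ y in α.dom t, ENNReal.ofReal (f y) ∂ν := by
    have hcomp : Measurable fun a => ENNReal.ofReal (f (α.act t a)) :=
      (hf_meas.comp (α.act_meas t)).ennreal_ofReal
    rw [← hmap, lintegral_map hf_meas.ennreal_ofReal (α.act_meas t), hμ_def,
      lintegral_withDensity_eq_lintegral_mul _ (α.σ_meas t).ennreal_ofReal hcomp]
    simp only [Pi.mul_apply]
  have hfin : ∫⁻ x in E, ENNReal.ofReal (α.σ x t) * ENNReal.ofReal (f (α.act t x)) ∂ν < ∞ := by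
    rw [hcv]
    calc ∫⁻ y in α.dom t, ENNReal.ofReal (f y) ∂ν
        ≤ ∫⁻ y, ENNReal.ofReal (f y) ∂ν := setLIntegral_le_lintegral _ _
      _ = ENNReal.ofReal (∫ y, f y ∂ν) :=
          (ofReal_integral_eq_lintegral_ofReal hf_int (ae_of_all _ hf_nonneg)).symm
      _ < ∞ := ENNReal.ofReal_lt_top
  -- integrability of the dominating function
  have hφ_meas : Measurable (fun x => α.σ x t * f (α.act t x)) :=
    (α.σ_meas t).mul (hf_meas.comp (α.act_meas t))
  have hφ_int : Integrable (fun x => α.σ x t * f (α.act t x)) (ν.restrict E) := by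
    refine ⟨hφ_meas.aestronglyMeasurable, ?_⟩
    rw [hasFiniteIntegral_iff_norm]
    have : ∀ x, ENNReal.ofReal ‖α.σ x t * f (α.act t x)‖
        = ENNReal.ofReal (α.σ x t) * ENNReal.ofReal (f (α.act t x)) := by
      intro x
      rw [Real.norm_eq_abs, abs_of_nonneg (mul_nonneg (α.σ_nonneg x t) (hf_nonneg _)),
        ENNReal.ofReal_mul (α.σ_nonneg x t)]
    simp only [this]
    exact hfin
  have hF_int : Integrable (fun x => |f x - α.σ x t * f (α.act t x)|) (ν.restrict E) := by
    refine Integrable.mono ((hf_int.restrict).add hφ_int)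
      (hf_meas.sub hφ_meas).abs.aestronglyMeasurable (ae_of_all _ fun x => ?_)
    have h1 : |f x - α.σ x t * f (α.act t x)| ≤ f x + α.σ x t * f (α.act t x) := by
      rw [abs_sub_le_iff]
      constructor <;>
        nlinarith [hf_nonneg x, mul_nonneg (α.σ_nonneg x t) (hf_nonneg (α.act t x))]
    rw [Real.norm_eq_abs, Real.norm_eq_abs, abs_abs]
    exact h1.trans (le_abs_self _)
  calc ∫ x in E, |g x - (α.σ x t) ^ (1 / p) * g (α.act t x)| ^ p ∂ν
      ≤ ∫ x in E, |f x - α.σ x t * f (α.act t x)| ∂ν :=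
        integral_mono_of_nonneg (ae_of_all _ fun x => Real.rpow_nonneg (abs_nonneg _) _)
          hF_int (ae_of_all _ hSF)
    _ < ε := hf_small t ht
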